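/- arXiv:1305.0177 — 2 statements merged into one kernel-verified Lean document; each statement's English description precedes it below -/
import Mathlib

section
/- Fix d > 0 and set m = ⌈dn/2⌉. Then for all sufficiently large n and every set A of multigraphs on V = {1,...,n}: P[G(n,m) ∈ A] ≤ e^{d + 2d²} · P[G'(n,m) ∈ A], where the simple graph G(n,m) is regarded as a multigraph. -/
/-- Uniform counting probability on a finite sample space `Ω`. -/
noncomputable def prob {Ω : Type*} (p : Ω → Prop) : ℝ :=
  (Nat.card {x : Ω // p x} : ℝ) / (Nat.card Ω : ℝ)

/-- The sample space of the random graph `G(n,m)`. -/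
def GraphSpace (n m : ℕ) : Type :=
  {E : Finset (Sym2 (Fin n)) // E.card = m ∧ ∀ e ∈ E, ¬ e.IsDiag}

/-- The sample space of the random multigraph `G'(n,m)`. -/
abbrev MultiSpace (n m : ℕ) := Fin m → Fin n × Fin n

/-- The multigraph (multiset of undirected edges) given by the tuple `e`. -/
def toMultigraph {n m : ℕ} (e : MultiSpace n m) : Multiset (Sym2 (Fin n)) :=
  Finset.univ.val.map (fun i => Sym2.mk (e i).1 (e i).2)

instance (n m : ℕ) : Finite (GraphSpace n m) := by unfold GraphSpace; exact Subtype.finite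

noncomputable def rep {n : ℕ} (s : Sym2 (Fin n)) : Fin n × Fin n := (Sym2.sortEquiv s : Fin n × Fin n)

lemma mk_rep {n : ℕ} (s : Sym2 (Fin n)) : Sym2.mk (rep s).1 (rep s).2 = s :=
  Sym2.sortEquiv.symm_apply_apply s

noncomputable def edgeAt {n m : ℕ} (G : GraphSpace n m) (j : Fin m) : Sym2 (Fin n) :=
  ((Finset.equivFinOfCardEq G.2.1).symm j : Sym2 (Fin n))

lemma edgeAt_mem {n m : ℕ} (G : GraphSpace n m) (j : Fin m) : edgeAt G j ∈ G.1 :=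
  ((Finset.equivFinOfCardEq G.2.1).symm j).2

lemma edgeAt_injective {n m : ℕ} (G : GraphSpace n m) : Function.Injective (edgeAt G) :=
  fun a b h => (Finset.equivFinOfCardEq G.2.1).symm.injective (Subtype.ext h)

lemma univ_val_map_equiv {α β : Type*} [Fintype α] [Fintype β] (e : α ≃ β) :
    (Finset.univ.val.map e : Multiset β) = Finset.univ.val := by
  have := congrArg Finset.val (Finset.map_univ_equiv e)
  simpa using this

lemma univ_val_map_val {α : Type*} [Fintype α] (s : Finset α) :
    ((Finset.univ : Finset ↥s).val.map Subtype.val) = s.val := by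
  rw [Finset.univ_eq_attach]
  show Multiset.map Subtype.val s.val.attach = s.val
  exact Multiset.attach_map_val s.val

noncomputable def tupleOf {n m : ℕ} (G : GraphSpace n m) (σ : Equiv.Perm (Fin m))
    (b : Fin m → Bool) : MultiSpace n m :=
  fun i => if b i then rep (edgeAt G (σ i)) else (rep (edgeAt G (σ i))).swap

lemma mk_tupleOf {n m : ℕ} (G : GraphSpace n m) (σ : Equiv.Perm (Fin m)) (b : Fin m → Bool)
    (i : Fin m) : Sym2.mk (tupleOf G σ b i).1 (tupleOf G σ b i).2 = edgeAt G (σ i) := by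
  unfold tupleOf
  split <;> simp [Sym2.mk_prod_swap_eq, mk_rep]

lemma toMultigraph_tupleOf {n m : ℕ} (G : GraphSpace n m) (σ : Equiv.Perm (Fin m))
    (b : Fin m → Bool) : toMultigraph (tupleOf G σ b) = G.1.val := by
  unfold toMultigraph
  have h1 : (fun i => Sym2.mk (tupleOf G σ b i).1 (tupleOf G σ b i).2) = fun i => edgeAt G (σ i) :=
    funext (mk_tupleOf G σ b)
  rw [h1]
  have e := Finset.equivFinOfCardEq G.2.1
  calc Finset.univ.val.map (fun i => edgeAt G (σ i))
      = (Finset.univ.val.map σ).map (edgeAt G) := by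
        rw [Multiset.map_map]; rfl
    _ = Finset.univ.val.map (edgeAt G) := by rw [univ_val_map_equiv]
    _ = (Finset.univ.val.map (Finset.equivFinOfCardEq G.2.1).symm).map Subtype.val := by
        rw [Multiset.map_map]; rfl
    _ = (Finset.univ : Finset ↥G.1).val.map Subtype.val := by rw [univ_val_map_equiv]
    _ = G.1.val := univ_val_map_val G.1

lemma card_le {n m : ℕ} (A : Set (Multiset (Sym2 (Fin n)))) :
    Nat.card {G : GraphSpace n m // (G.1.val : Multiset (Sym2 (Fin n))) ∈ A} *
      (Nat.factorial m * 2 ^ m)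
    ≤ Nat.card {e : MultiSpace n m // toMultigraph e ∈ A} := by
  have hF : Function.Injective
      (fun x : {G : GraphSpace n m // (G.1.val : Multiset (Sym2 (Fin n))) ∈ A} ×
          Equiv.Perm (Fin m) × (Fin m → Bool) =>
        (⟨tupleOf x.1.1 x.2.1 x.2.2, by
            rw [toMultigraph_tupleOf]; exact x.1.2⟩ :
          {e : MultiSpace n m // toMultigraph e ∈ A})) := by
    rintro ⟨⟨G₁, hA₁⟩, σ₁, b₁⟩ ⟨⟨G₂, hA₂⟩, σ₂, b₂⟩ h
    simp only [Subtype.mk.injEq] at h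
    have hG : G₁ = G₂ := by
      apply Subtype.ext; apply Finset.val_injective
      rw [← toMultigraph_tupleOf G₁ σ₁ b₁, ← toMultigraph_tupleOf G₂ σ₂ b₂, h]
    subst hG
    have hσ : σ₁ = σ₂ := by
      apply Equiv.ext; intro i
      have h2 := congrArg (fun p : Fin n × Fin n => Sym2.mk p.1 p.2) (congrFun h i)
      rw [mk_tupleOf, mk_tupleOf] at h2
      exact edgeAt_injective G₁ h2
    subst hσ
    have hb : b₁ = b₂ := by
      funext i
      have hi := congrFun h i
      have hdg : ¬ (edgeAt G₁ (σ₁ i)).IsDiag := G₁.2.2 _ (edgeAt_mem _ _)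
      have hrep : (rep (edgeAt G₁ (σ₁ i))).1 ≠ (rep (edgeAt G₁ (σ₁ i))).2 := by
        intro hcon
        exact hdg (by rw [← mk_rep (edgeAt G₁ (σ₁ i))]
                      exact Sym2.isDiag_iff_proj_eq.2 hcon)
      unfold tupleOf at hi
      cases h1 : b₁ i <;> cases h2 : b₂ i <;>
        simp only [h1, h2, Bool.false_eq_true, if_false, if_true, ite_false, ite_true] at hi
      · rfl
      · exact absurd (congrArg Prod.fst hi.symm) hrep
      · exact absurd (congrArg Prod.fst hi) hrep
      · rfl
    subst hb
    rfl
  have hcard := Nat.card_le_card_of_injective _ hF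
  rw [Nat.card_prod, Nat.card_prod] at hcard
  have e1 : Nat.card (Equiv.Perm (Fin m)) = Nat.factorial m := by
    rw [Nat.card_eq_fintype_card, Fintype.card_perm, Fintype.card_fin]
  have e2 : Nat.card (Fin m → Bool) = 2 ^ m := by
    rw [Nat.card_fun]
    simp [Nat.card_eq_fintype_card]
  rw [e1, e2, ← mul_assoc] at hcard
  linarith [hcard]

lemma card_graphSpace (n m : ℕ) : Nat.card (GraphSpace n m) = (n.choose 2).choose m := by
  have e : GraphSpace n m ≃
      ↥((Finset.univ.filter (fun s : Sym2 (Fin n) => ¬ s.IsDiag)).powersetCard m) :=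
  { toFun := fun G => ⟨G.1, Finset.mem_powersetCard.2
      ⟨fun x hx => Finset.mem_filter.2 ⟨Finset.mem_univ x, G.2.2 x hx⟩, G.2.1⟩⟩
    invFun := fun E => ⟨E.1, (Finset.mem_powersetCard.1 E.2).2,
      fun x hx => (Finset.mem_filter.1 ((Finset.mem_powersetCard.1 E.2).1 hx)).2⟩
    left_inv := fun G => rfl
    right_inv := fun E => rfl }
  rw [Nat.card_congr e, Nat.card_eq_finsetCard, Finset.card_powersetCard]
  congr 1
  rw [← Fintype.card_subtype, Sym2.card_subtype_not_diag, Fintype.card_fin]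

lemma exp_neg_le_one_sub (x : ℝ) (h0 : 0 ≤ x) (h2 : x ≤ 1/2) :
    Real.exp (-(2*x)) ≤ 1 - x := by
  have h1 : 2*x + 1 ≤ Real.exp (2*x) := Real.add_one_le_exp (2*x)
  have hp : (0:ℝ) < Real.exp (2*x) := Real.exp_pos _
  rw [Real.exp_neg, inv_eq_one_div, div_le_iff₀ hp]
  nlinarith

theorem statement8 (d : ℝ) (hd : 0 < d) :
    ∃ n₀ : ℕ, ∀ n : ℕ, n₀ ≤ n →
      ∀ A : Set (Multiset (Sym2 (Fin n))),
        prob (fun G : GraphSpace n ⌈d * n / 2⌉₊ => (G.1.val : Multiset (Sym2 (Fin n))) ∈ A)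
          ≤ Real.exp (d + 2 * d ^ 2) *
            prob (fun e : MultiSpace n ⌈d * n / 2⌉₊ => toMultigraph e ∈ A) := by
  refine ⟨max ⌈2*d+6⌉₊ ⌈(4*d+6)/d^2⌉₊ + 1, fun n hn A => ?_⟩
  set m := ⌈d * n / 2⌉₊ with hmdef
  have hn1 : 1 ≤ n := le_trans (Nat.le_add_left 1 _) hn
  have hnR : (1:ℝ) ≤ (n:ℝ) := by exact_mod_cast hn1
  have hn6 : 2*d + 6 ≤ (n:ℝ) := by
    have h1 : ⌈2*d+6⌉₊ ≤ n := le_trans (le_trans (le_max_left _ _) (Nat.le_succ _)) hn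
    calc 2*d+6 ≤ (⌈2*d+6⌉₊:ℝ) := Nat.le_ceil _
      _ ≤ (n:ℝ) := by exact_mod_cast h1
  have hn46 : 4*d + 6 ≤ d^2 * n := by
    have h1 : ⌈(4*d+6)/d^2⌉₊ ≤ n := le_trans (le_trans (le_max_right _ _) (Nat.le_succ _)) hn
    have h2 : (4*d+6)/d^2 ≤ (n:ℝ) := le_trans (Nat.le_ceil _) (by exact_mod_cast h1)
    have hd2 : (0:ℝ) < d^2 := by positivity
    calc 4*d+6 = ((4*d+6)/d^2) * d^2 := by field_simp
      _ ≤ (n:ℝ) * d^2 := mul_le_mul_of_nonneg_right h2 hd2.le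
      _ = d^2 * n := mul_comm _ _
  have hm2 : 2*(m:ℝ) ≤ d*n + 2 := by
    have h1 : (⌈d * n / 2⌉₊ : ℝ) < d*n/2 + 1 :=
      Nat.ceil_lt_add_one (by positivity)
    rw [hmdef]
    push_cast
    nlinarith
  set a : ℝ := (n:ℝ) * n with ha
  have haP : (0:ℝ) < a := by positivity
  set N := n.choose 2 with hNdef
  have hNR : (N:ℝ) = ((n:ℝ) * n - n)/2 := by
    rw [hNdef, Nat.cast_choose_two]; ring
  have hmN : (m:ℝ) ≤ (N:ℝ) := by
    rw [hNR]
    nlinarith [mul_le_mul_of_nonneg_right hn6 (le_trans zero_le_one hnR)]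
  have hmN' : m ≤ N := by exact_mod_cast hmN
  set b : ℝ := a - n - 2*m with hb
  have hbval : ((N - m : ℕ) : ℝ) * 2 = b := by
    rw [Nat.cast_sub hmN', hNR, hb, ha]; ring
  have hbP : (0:ℝ) < b := by
    rw [hb, ha]
    nlinarith [mul_le_mul_of_nonneg_right hn6 (le_trans zero_le_one hnR)]
  -- core analytic estimate
  have hcore : a ^ m ≤ Real.exp (d + 2*d^2) * b ^ m := by
    set x : ℝ := ((n:ℝ) + 2*m)/a with hx
    have hx0 : 0 ≤ x := by positivity
    have hx2 : x ≤ 1/2 := by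
      rw [hx, div_le_iff₀ haP]
      nlinarith [mul_le_mul_of_nonneg_right hn6 (le_trans zero_le_one hnR)]
    have hxm : 2*x*(m:ℝ) ≤ d + 2*d^2 := by
      rw [hx, show 2*(((n:ℝ) + 2*m)/a)*(m:ℝ) = (2*((n:ℝ)+2*m)*m)/a by ring, div_le_iff₀ haP]
      nlinarith [mul_nonneg (sub_nonneg.mpr hm2)
          (by positivity : (0:ℝ) ≤ (n:ℝ) + d*n + 2 + 2*m),
        mul_le_mul_of_nonneg_right hn46 (le_trans zero_le_one hnR),
        (Nat.cast_nonneg m : (0:ℝ) ≤ (m:ℝ))]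
    have hxe := exp_neg_le_one_sub x hx0 hx2
    have h3 : Real.exp (2*x) * Real.exp (-(2*x)) = 1 := by
      rw [← Real.exp_add]; simp
    have h2 : a ≤ Real.exp (2*x) * b := by
      have h4 : b = a * (1 - x) := by
        rw [hx]; field_simp [hb]; ring
      rw [h4]
      have h5 := mul_le_mul_of_nonneg_left hxe (Real.exp_pos (2*x)).le
      rw [h3] at h5
      nlinarith [Real.exp_pos (2*x)]
    calc a^m ≤ (Real.exp (2*x) * b)^m := pow_le_pow_left₀ haP.le h2 m
      _ = (Real.exp (2*x))^m * b^m := mul_pow _ _ _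
      _ = Real.exp (2*x*m) * b^m := by
          rw [mul_comm (2*x) (m:ℝ), Real.exp_nat_mul]
      _ ≤ Real.exp (d + 2*d^2) * b^m := by
          have := Real.exp_le_exp.mpr hxm
          exact mul_le_mul_of_nonneg_right this (pow_nonneg hbP.le m)
  -- counting estimates
  have hfacN : ((N:ℝ) - m)^m * 2^m ≤ (m.factorial : ℝ) * (N.choose m : ℝ) * 2^m := by
    have h1 : (N - m)^m ≤ N.descFactorial m :=
      le_trans (Nat.pow_le_pow_left (Nat.sub_le_sub_right (Nat.le_succ N) m) m)
        (Nat.pow_sub_le_descFactorial N m)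
    rw [Nat.descFactorial_eq_factorial_mul_choose] at h1
    have h2 : ((N:ℝ) - m)^m ≤ (m.factorial : ℝ) * (N.choose m : ℝ) := by
      rw [← Nat.cast_sub hmN']
      exact_mod_cast h1
    exact mul_le_mul_of_nonneg_right h2 (by positivity)
  have hbpow : b^m ≤ (2:ℝ)^m * ((m.factorial : ℝ) * (N.choose m : ℝ)) := by
    have hbeq : b = ((N:ℝ) - m) * 2 := by
      rw [← hbval, Nat.cast_sub hmN']
    rw [hbeq, mul_pow]
    calc ((N:ℝ) - m)^m * 2^m ≤ (m.factorial : ℝ) * (N.choose m : ℝ) * 2^m := hfacN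
      _ = (2:ℝ)^m * ((m.factorial : ℝ) * (N.choose m : ℝ)) := by ring
  -- unfold probabilities
  unfold prob
  rw [card_graphSpace n m]
  have hMS : (Nat.card (MultiSpace n m) : ℝ) = a^m := by
    rw [Nat.card_fun]
    simp only [Nat.card_eq_fintype_card, Fintype.card_prod, Fintype.card_fin]
    push_cast [ha]
    ring
  rw [hMS]
  set K := Nat.card {x : GraphSpace n m // (x.1.val : Multiset (Sym2 (Fin n))) ∈ A} with hK
  set L := Nat.card {x : MultiSpace n m // toMultigraph x ∈ A} with hL
  rcases Nat.eq_zero_or_pos K with hK0 | hKpos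
  · rw [hK0]
    simp only [Nat.cast_zero, zero_div]
    positivity
  · have hSpos : 0 < N.choose m := Nat.choose_pos hmN'
    have hSR : (0:ℝ) < (N.choose m : ℝ) := by exact_mod_cast hSpos
    have haPm : (0:ℝ) < a^m := pow_pos haP m
    have hcount : (K:ℝ) * ((m.factorial : ℝ) * 2^m) ≤ (L:ℝ) := by
      exact_mod_cast card_le A
    rw [mul_div_assoc']
    rw [div_le_div_iff₀ hSR haPm]
    calc (K:ℝ) * a^m
        ≤ (K:ℝ) * (Real.exp (d + 2*d^2) * b^m) := by
          exact mul_le_mul_of_nonneg_left hcore (Nat.cast_nonneg K)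
      _ ≤ (K:ℝ) * (Real.exp (d + 2*d^2) *
            ((2:ℝ)^m * ((m.factorial : ℝ) * (N.choose m : ℝ)))) := by
          refine mul_le_mul_of_nonneg_left ?_ (Nat.cast_nonneg K)
          exact mul_le_mul_of_nonneg_left hbpow (Real.exp_pos _).le
      _ = Real.exp (d + 2*d^2) * ((K:ℝ) * ((m.factorial : ℝ) * 2^m)) * (N.choose m : ℝ) := by
          ring
      _ ≤ Real.exp (d + 2*d^2) * (L:ℝ) * (N.choose m : ℝ) := by
          refine mul_le_mul_of_nonneg_right ?_ hSR.le
          exact mul_le_mul_of_nonneg_left hcount (Real.exp_pos _).le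
end

section
/- There is a constant k_0 ∈ ℕ such that for every k ≥ k_0 and every d with 2k·ln k − ln k − 4 ≤ d ≤ 2k·ln k, the following holds w.h.p. for the random multigraph G'(n,⌈dn/2⌉): every nonempty set Y ⊆ V with |Y| ≤ ⌈2n·ln ln k/(k·ln k)⌉ satisfies e(Y) < (ℓ/2)·|Y|, where ℓ = e^{−7}·ln k. -/
open Filter
open Finset

/-- `e(Y)`: the number of edges (with multiplicity) with both endpoints in `Y`. -/
noncomputable def eIn {n m : ℕ} (e : MultiSpace n m) (Y : Finset (Fin n)) : ℕ :=
  Nat.card {t : Fin m // (e t).1 ∈ Y ∧ (e t).2 ∈ Y}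

lemma nat_card_subtype {α : Type*} [Fintype α] (p : α → Prop) [DecidablePred p] :
    Nat.card {x // p x} = (univ.filter p).card := by
  rw [Nat.card_eq_fintype_card, Fintype.card_subtype]

lemma eIn_eq {n m : ℕ} (e : MultiSpace n m) (Y : Finset (Fin n)) [DecidablePred (fun i : Fin m => (e i).1 ∈ Y ∧ (e i).2 ∈ Y)] :
    eIn e Y = (univ.filter (fun i : Fin m => (e i).1 ∈ Y ∧ (e i).2 ∈ Y)).card := by
  classical
  unfold eIn
  rw [nat_card_subtype]

open Classical in
lemma countA {n m : ℕ} (Y : Finset (Fin n)) (t : ℕ) :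
    Nat.card {e : MultiSpace n m // t ≤ eIn e Y} ≤
      m.choose t * Y.card ^ (2 * t) * (n ^ 2) ^ (m - t) := by
  classical
  rw [nat_card_subtype]
  set P : Finset (Fin n × Fin n) := Y ×ˢ Y with hP
  have hsub : (univ.filter (fun e : MultiSpace n m => t ≤ eIn e Y)) ⊆
      (powersetCard t (univ : Finset (Fin m))).biUnion
        (fun T => univ.filter (fun e : MultiSpace n m => ∀ i ∈ T, e i ∈ P)) := by
    intro e he
    simp only [mem_filter, mem_univ, true_and] at he
    rw [eIn_eq] at he
    obtain ⟨T, hTsub, hTcard⟩ := Finset.exists_subset_card_eq he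
    refine Finset.mem_biUnion.2 ⟨T, ?_, ?_⟩
    · exact Finset.mem_powersetCard_univ.2 hTcard
    · simp only [mem_filter, mem_univ, true_and]
      intro i hi
      have := hTsub hi
      simp only [mem_filter, mem_univ, true_and] at this
      simpa [hP, Finset.mem_product] using this
  have hcount : ∀ T ∈ powersetCard t (univ : Finset (Fin m)),
      (univ.filter (fun e : MultiSpace n m => ∀ i ∈ T, e i ∈ P)).card
        = Y.card ^ (2 * t) * (n ^ 2) ^ (m - t) := by
    intro T hT
    have hTcard : T.card = t := Finset.mem_powersetCard_univ.1 hT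
    have hkey : (univ.filter (fun e : MultiSpace n m => ∀ i ∈ T, e i ∈ P)) =
        Fintype.piFinset (fun i : Fin m => if i ∈ T then P else univ) := by
      ext e
      simp only [mem_filter, mem_univ, true_and, Fintype.mem_piFinset]
      constructor
      · intro h i
        by_cases hi : i ∈ T <;> simp [hi, h]
      · intro h i hi
        have := h i
        simpa [hi] using this
    rw [hkey, Fintype.card_piFinset]
    rw [← Finset.prod_filter_mul_prod_filter_not univ (· ∈ T)]
    have h1 : univ.filter (· ∈ T) = T := by ext; simp
    have h2 : (univ.filter (· ∉ T)) = Tᶜ := by ext; simp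
    rw [h1, h2]
    have e1 : ∏ x ∈ T, (if x ∈ T then P else univ).card = P.card ^ t := by
      rw [Finset.prod_congr rfl (fun x hx => by rw [if_pos hx])]
      simp [hTcard]
    have e2 : ∏ x ∈ Tᶜ, (if x ∈ T then P else (univ : Finset (Fin n × Fin n))).card
        = (n ^ 2) ^ (m - t) := by
      rw [Finset.prod_congr rfl (fun x hx => by rw [if_neg (by simpa using hx)])]
      simp [Finset.card_compl, hTcard, Finset.card_univ, sq]
    rw [e1, e2]
    have hPcard : P.card = Y.card ^ 2 := by simp [hP, Finset.card_product, sq]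
    rw [hPcard, ← pow_mul]
  calc (univ.filter (fun e : MultiSpace n m => t ≤ eIn e Y)).card
      ≤ ((powersetCard t (univ : Finset (Fin m))).biUnion
          (fun T => univ.filter (fun e : MultiSpace n m => ∀ i ∈ T, e i ∈ P))).card :=
        Finset.card_le_card hsub
    _ ≤ ∑ T ∈ powersetCard t (univ : Finset (Fin m)),
          (univ.filter (fun e : MultiSpace n m => ∀ i ∈ T, e i ∈ P)).card :=
        Finset.card_biUnion_le
    _ = ∑ T ∈ powersetCard t (univ : Finset (Fin m)),
          Y.card ^ (2 * t) * (n ^ 2) ^ (m - t) := Finset.sum_congr rfl hcount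
    _ = m.choose t * (Y.card ^ (2 * t) * (n ^ 2) ^ (m - t)) := by
        rw [Finset.sum_const, card_powersetCard, card_univ, Fintype.card_fin, smul_eq_mul]
    _ = m.choose t * Y.card ^ (2 * t) * (n ^ 2) ^ (m - t) := (mul_assoc _ _ _).symm

lemma prob_nonneg {Ω : Type*} (p : Ω → Prop) : 0 ≤ prob p :=
  div_nonneg (Nat.cast_nonneg _) (Nat.cast_nonneg _)

lemma prob_compl {Ω : Type*} [Fintype Ω] [Nonempty Ω] (p : Ω → Prop) :
    prob p = 1 - prob (fun x => ¬ p x) := by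
  classical
  unfold prob
  rw [Nat.card_eq_fintype_card (α := Ω), nat_card_subtype, nat_card_subtype]
  have h : (univ.filter p).card + (univ.filter (fun x => ¬ p x)).card = Fintype.card Ω := by
    rw [Finset.card_filter_add_card_filter_not, Finset.card_univ]
  have hc : (0:ℝ) < (Fintype.card Ω : ℝ) := by
    exact_mod_cast Fintype.card_pos
  field_simp
  rw [← h]
  push_cast
  ring

lemma prob_union {Ω ι : Type*} [Fintype Ω] (F : Finset ι) (q : ι → Ω → Prop) :
    prob (fun x => ∃ Y ∈ F, q Y x) ≤ ∑ Y ∈ F, prob (fun x => q Y x) := by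
  classical
  unfold prob
  rw [← Finset.sum_div]
  have hnum : ((univ.filter (fun x : Ω => ∃ Y ∈ F, q Y x)).card : ℝ)
      ≤ ∑ Y ∈ F, ((univ.filter (fun x => q Y x)).card : ℝ) := by
    have h1 : (univ.filter (fun x : Ω => ∃ Y ∈ F, q Y x)) ⊆
        F.biUnion (fun Y => univ.filter (fun x => q Y x)) := by
      intro x hx
      simp only [mem_filter, mem_univ, true_and] at hx
      obtain ⟨Y, hY, hq⟩ := hx
      exact Finset.mem_biUnion.2 ⟨Y, hY, by simp [hq]⟩
    calc ((univ.filter (fun x : Ω => ∃ Y ∈ F, q Y x)).card : ℝ)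
        ≤ ((F.biUnion (fun Y => univ.filter (fun x => q Y x))).card : ℝ) := by
          exact_mod_cast Finset.card_le_card h1
      _ ≤ _ := by exact_mod_cast Finset.card_biUnion_le
  rw [nat_card_subtype]
  have : ∀ Y : ι, (Nat.card {x : Ω // q Y x} : ℝ) = ((univ.filter (fun x => q Y x)).card : ℝ) := by
    intro Y; rw [nat_card_subtype]
  simp only [this]
  rcases eq_or_lt_of_le (Nat.cast_nonneg (Fintype.card Ω) : (0:ℝ) ≤ _) with h0 | h0
  · rw [Nat.card_eq_fintype_card (α := Ω)]
    simp [← h0]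
  · rw [Nat.card_eq_fintype_card (α := Ω)]
    exact (div_le_div_iff_of_pos_right h0).2 hnum

lemma card_multiSpace (n m : ℕ) : Nat.card (MultiSpace n m) = (n^2) ^ m := by
  rw [Nat.card_eq_fintype_card, Fintype.card_fun]
  simp [Fintype.card_prod, sq]

lemma probY {n m : ℕ} (hn : 1 ≤ n) (Y : Finset (Fin n)) (t : ℕ) :
    prob (fun e : MultiSpace n m => t ≤ eIn e Y) ≤
      (m.choose t : ℝ) * (Y.card : ℝ)^(2*t) / ((n:ℝ)^2)^t := by
  have hN : (0:ℝ) < ((n:ℝ)^2)^m := by positivity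
  have hNt : (0:ℝ) < ((n:ℝ)^2)^t := by positivity
  unfold prob
  rw [card_multiSpace]
  rcases le_or_gt t m with htm | htm
  · have hcast : (Nat.card {e : MultiSpace n m // t ≤ eIn e Y} : ℝ) ≤
        (m.choose t : ℝ) * (Y.card : ℝ)^(2*t) * ((n:ℝ)^2)^(m-t) := by
      have := countA (m := m) Y t
      have h2 : ((m.choose t * Y.card ^ (2 * t) * (n ^ 2) ^ (m - t) : ℕ) : ℝ)
          = (m.choose t : ℝ) * (Y.card : ℝ)^(2*t) * ((n:ℝ)^2)^(m-t) := by push_cast; ring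
      rw [← h2]; exact_mod_cast this
    have hpow : ((n:ℝ)^2)^(m-t) = ((n:ℝ)^2)^m / ((n:ℝ)^2)^t := by
      rw [eq_div_iff (ne_of_gt hNt), ← pow_add]
      congr 1
      omega
    rw [div_le_div_iff₀ (by exact_mod_cast hN) hNt]
    push_cast
    calc (Nat.card {e : MultiSpace n m // t ≤ eIn e Y} : ℝ) * ((n:ℝ)^2)^t
        ≤ ((m.choose t : ℝ) * (Y.card : ℝ)^(2*t) * (((n:ℝ)^2)^m / ((n:ℝ)^2)^t)) * ((n:ℝ)^2)^t := by
          apply mul_le_mul_of_nonneg_right _ (le_of_lt hNt)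
          rw [← hpow]; exact hcast
      _ = (m.choose t : ℝ) * (Y.card : ℝ)^(2*t) * ((n:ℝ)^2)^m := by
          field_simp
  · have hzero : Nat.card {e : MultiSpace n m // t ≤ eIn e Y} = 0 := by
      have := countA (m := m) Y t
      rwa [Nat.choose_eq_zero_of_lt htm, zero_mul, zero_mul, Nat.le_zero] at this
    rw [hzero]
    push_cast
    rw [zero_div]
    positivity

lemma choose_le_epow (n y : ℕ) (hy : 1 ≤ y) :
    (n.choose y : ℝ) ≤ (Real.exp 1 * n / y) ^ y := by
  have hyR : (0:ℝ) < y := by exact_mod_cast hy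
  have h1 : (n.choose y : ℝ) ≤ (n:ℝ)^y / (y.factorial : ℝ) := Nat.choose_le_pow_div y n
  have h2 : (y:ℝ)^y / (y.factorial : ℝ) ≤ Real.exp y := Real.pow_div_factorial_le_exp _ (le_of_lt hyR) y
  have hfac : (0:ℝ) < (y.factorial : ℝ) := by exact_mod_cast y.factorial_pos
  have h3 : (y:ℝ)^y ≤ Real.exp 1 ^ y * (y.factorial : ℝ) := by
    rw [Real.exp_one_pow]
    calc (y:ℝ)^y = ((y:ℝ)^y / (y.factorial:ℝ)) * (y.factorial:ℝ) := by field_simp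
      _ ≤ Real.exp y * (y.factorial:ℝ) := mul_le_mul_of_nonneg_right h2 (le_of_lt hfac)
  refine h1.trans ?_
  rw [div_pow, div_le_div_iff₀ hfac (by positivity), mul_pow]
  calc (n:ℝ)^y * (y:ℝ)^y ≤ (n:ℝ)^y * (Real.exp 1 ^ y * (y.factorial:ℝ)) :=
        mul_le_mul_of_nonneg_left h3 (by positivity)
    _ = Real.exp 1 ^ y * (n:ℝ)^y * (y.factorial:ℝ) := by ring

lemma per_y (n m y t : ℕ) (A c' L D : ℝ)
    (hn : 1 ≤ n) (hy : 1 ≤ y) (ht : 1 ≤ t)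
    (hL2 : 2 ≤ L)
    (hbase : Real.exp 1 * m * (y:ℝ)^2 / ((t:ℝ) * (n:ℝ)^2) ≤ A * ((y:ℝ)/n))
    (hty : L * y ≤ (t:ℝ))
    (hu : (y:ℝ)/n ≤ c')
    (hApos : 0 < A)
    (hAc1 : A * c' ≤ 1)
    (hD : D = Real.exp 1 * A ^ L * c' ^ (L-2))
    (hDc : D * c' ≤ 1/4) :
    (n.choose y : ℝ) * ((m.choose t : ℝ) * (y:ℝ)^(2*t) / ((n:ℝ)^2)^t)
      ≤ (D / n) * 2 * (1/2:ℝ)^(y-1) := by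
  have hnR : (0:ℝ) < n := by exact_mod_cast hn
  have hyR : (0:ℝ) < y := by exact_mod_cast hy
  have htR : (0:ℝ) < t := by exact_mod_cast ht
  set u : ℝ := (y:ℝ)/n with hu_def
  have hupos : 0 < u := by positivity
  have hc'pos : 0 < c' := lt_of_lt_of_le hupos hu
  have hAu_pos : 0 < A * u := by positivity
  have hAu1 : A * u ≤ 1 := le_trans (mul_le_mul_of_nonneg_left hu (le_of_lt hApos)) hAc1
  have hDnonneg : 0 ≤ D := by rw [hD]; positivity
  -- Step 1: inner factor ≤ (A*u)^t
  have step1 : (m.choose t : ℝ) * (y:ℝ)^(2*t) / ((n:ℝ)^2)^t ≤ (A*u)^t := by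
    have h1 : (m.choose t : ℝ) ≤ (m:ℝ)^t / (t.factorial : ℝ) := Nat.choose_le_pow_div t m
    have hfac : (0:ℝ) < (t.factorial : ℝ) := by exact_mod_cast t.factorial_pos
    have h3 : (t:ℝ)^t ≤ Real.exp 1 ^ t * (t.factorial : ℝ) := by
      rw [Real.exp_one_pow]
      have h2 : (t:ℝ)^t / (t.factorial : ℝ) ≤ Real.exp t :=
        Real.pow_div_factorial_le_exp _ (le_of_lt htR) t
      calc (t:ℝ)^t = ((t:ℝ)^t / (t.factorial:ℝ)) * (t.factorial:ℝ) := by field_simp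
        _ ≤ Real.exp t * (t.factorial:ℝ) := mul_le_mul_of_nonneg_right h2 (le_of_lt hfac)
    have key : (m.choose t : ℝ) * (y:ℝ)^(2*t) / ((n:ℝ)^2)^t
        ≤ (Real.exp 1 * m * (y:ℝ)^2 / ((t:ℝ) * (n:ℝ)^2))^t := by
      have expand : (Real.exp 1 * m * (y:ℝ)^2 / ((t:ℝ) * (n:ℝ)^2))^t
          = (Real.exp 1 ^ t * (m:ℝ)^t * ((y:ℝ)^2)^t) / ((t:ℝ)^t * ((n:ℝ)^2)^t) := by
        rw [div_pow]; ring_nf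
      rw [expand, pow_mul]  -- y^(2t) = (y^2)^t
      rw [div_le_div_iff₀ (by positivity) (by positivity)]
      calc (m.choose t : ℝ) * ((y:ℝ)^2)^t * ((t:ℝ)^t * ((n:ℝ)^2)^t)
          ≤ ((m:ℝ)^t / (t.factorial : ℝ)) * ((y:ℝ)^2)^t * ((Real.exp 1 ^ t * (t.factorial:ℝ)) * ((n:ℝ)^2)^t) := by
            apply mul_le_mul
            · exact mul_le_mul_of_nonneg_right h1 (by positivity)
            · exact mul_le_mul_of_nonneg_right h3 (by positivity)
            · positivity
            · positivity
        _ = Real.exp 1 ^ t * (m:ℝ)^t * ((y:ℝ)^2)^t * ((n:ℝ)^2)^t := by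
            field_simp
    refine key.trans ?_
    exact pow_le_pow_left₀ (by positivity) hbase t
  -- Step 2: (A*u)^t ≤ ((A*u)^L)^y  (rpow)
  have step2 : (A*u)^t ≤ ((A*u) ^ L) ^ y := by
    have e1 : (A*u)^t = (A*u) ^ ((t:ℝ)) := by rw [Real.rpow_natCast]
    have e2 : ((A*u) ^ L) ^ y = (A*u) ^ (L * y) := by
      rw [← Real.rpow_natCast ((A*u)^L) y, ← Real.rpow_mul (le_of_lt hAu_pos)]
    rw [e1, e2]
    exact Real.rpow_le_rpow_of_exponent_ge hAu_pos hAu1 hty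
  -- Step 3: full product ≤ (D*u)^y
  have step3 : (n.choose y : ℝ) * ((A*u) ^ L) ^ y ≤ (D*u)^y := by
    have hch : (n.choose y : ℝ) ≤ (Real.exp 1 * n / y) ^ y := choose_le_epow n y hy
    have comb : (n.choose y : ℝ) * ((A*u) ^ L) ^ y ≤ ((Real.exp 1 * n / y) * (A*u) ^ L) ^ y := by
      rw [mul_pow]
      exact mul_le_mul_of_nonneg_right hch (by positivity)
    refine comb.trans ?_
    apply pow_le_pow_left₀ (by positivity)
    -- base: (e*n/y) * (A*u)^L ≤ D*u
    have hAL : (A*u) ^ L = A ^ L * u ^ L := Real.mul_rpow (le_of_lt hApos) (le_of_lt hupos)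
    have huL : u ^ L = u ^ (L-2) * u * u := by
      have : L = (L-2) + 1 + 1 := by ring
      rw [this, Real.rpow_add hupos, Real.rpow_add hupos, Real.rpow_one]
      ring_nf
    have hny : Real.exp 1 * n / y = Real.exp 1 / u := by
      rw [hu_def]; field_simp
    have expand : (Real.exp 1 * n / y) * (A*u) ^ L = Real.exp 1 * A ^ L * u ^ (L-2) * u := by
      rw [hny, hAL, huL]; field_simp
    rw [expand]
    have hstep : u ^ (L-2) ≤ c' ^ (L-2) :=
      Real.rpow_le_rpow (le_of_lt hupos) hu (by linarith)
    calc Real.exp 1 * A ^ L * u ^ (L-2) * u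
        ≤ Real.exp 1 * A ^ L * c' ^ (L-2) * u := by
          apply mul_le_mul_of_nonneg_right _ (le_of_lt hupos)
          apply mul_le_mul_of_nonneg_left hstep (by positivity)
      _ = D * u := by rw [hD]
  -- Step 4: (D*u)^y ≤ (D/n)*2*(1/2)^(y-1)
  have step4 : (D*u)^y ≤ (D / n) * 2 * (1/2:ℝ)^(y-1) := by
    have hDu : 0 ≤ D * u := by positivity
    have hDu14 : D * u ≤ 1/4 :=
      le_trans (mul_le_mul_of_nonneg_left hu hDnonneg) hDc
    obtain ⟨y', rfl⟩ : ∃ y', y = y' + 1 := ⟨y - 1, by omega⟩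
    rw [pow_succ']
    have h1 : (D*u)^y' ≤ (1/4:ℝ)^y' := pow_le_pow_left₀ hDu hDu14 y'
    have h2 : D * u = (D/n) * (y'+1:ℝ) := by
      rw [hu_def]; push_cast; field_simp
    have h3 : ((y':ℝ)+1) ≤ 2 * 2^y' := by
      have := Nat.lt_two_pow_self (n := y'+1)
      have h4 : ((y'+1:ℕ):ℝ) ≤ (2:ℝ)^(y'+1) := by
        exact_mod_cast le_of_lt this
      rw [pow_succ] at h4
      push_cast at h4
      linarith
    have hsim : (y'+1) - 1 = y' := by omega
    rw [hsim]
    calc (D*u) * (D*u)^y' ≤ (D*u) * (1/4:ℝ)^y' := mul_le_mul_of_nonneg_left h1 hDu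
      _ = (D/n) * ((y':ℝ)+1) * (1/4:ℝ)^y' := by rw [h2]
      _ ≤ (D/n) * (2 * 2^y') * (1/4:ℝ)^y' := by
          apply mul_le_mul_of_nonneg_right _ (by positivity)
          exact mul_le_mul_of_nonneg_left h3 (by positivity)
      _ = (D/n) * 2 * ((2 * (1/4:ℝ))^y') := by rw [mul_pow]; ring
      _ = (D/n) * 2 * (1/2:ℝ)^y' := by norm_num
  calc (n.choose y : ℝ) * ((m.choose t : ℝ) * (y:ℝ)^(2*t) / ((n:ℝ)^2)^t)
      ≤ (n.choose y : ℝ) * ((A*u) ^ L) ^ y := by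
        apply mul_le_mul_of_nonneg_left (step1.trans step2) (by positivity)
    _ ≤ (D*u)^y := step3
    _ ≤ _ := step4

lemma prob_congr {Ω : Type*} {p q : Ω → Prop} (h : ∀ x, p x ↔ q x) : prob p = prob q := by
  have : p = q := funext fun x => propext (h x)
  rw [this]

lemma prob_bad_le (n m Y₀ : ℕ) (A c' L D : ℝ)
    (hn : 1 ≤ n)
    (hY₀ : (Y₀:ℝ) ≤ c' * n)
    (hc'pos : 0 < c')
    (hLpos : 0 < L) (hL2 : 2 ≤ L)
    (hApos : 0 < A)
    (hAc1 : A * c' ≤ 1)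
    (hmA : Real.exp 1 * m ≤ A * L * n)
    (hD : D = Real.exp 1 * A ^ L * c' ^ (L-2))
    (hDc : D * c' ≤ 1/4) :
    prob (fun e : MultiSpace n m => ∃ Y : Finset (Fin n),
        Y.Nonempty ∧ Y.card ≤ Y₀ ∧ ⌈L * Y.card⌉₊ ≤ eIn e Y)
      ≤ 4 * D / n := by
  classical
  have hnR : (0:ℝ) < n := by exact_mod_cast hn
  have hDnonneg : 0 ≤ D := by rw [hD]; positivity
  set tt : ℕ → ℕ := fun y => ⌈L * y⌉₊ with htt
  set F : Finset (Finset (Fin n)) :=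
    univ.filter (fun Y : Finset (Fin n) => Y.Nonempty ∧ Y.card ≤ Y₀) with hF
  set g : ℕ → ℝ := fun y =>
    (m.choose (tt y) : ℝ) * (y:ℝ)^(2*(tt y)) / ((n:ℝ)^2)^(tt y) with hg
  have hgnonneg : ∀ y, 0 ≤ g y := fun y => by rw [hg]; positivity
  -- step A : union bound
  have hA1 : prob (fun e : MultiSpace n m => ∃ Y : Finset (Fin n),
      Y.Nonempty ∧ Y.card ≤ Y₀ ∧ tt Y.card ≤ eIn e Y)
      ≤ ∑ Y ∈ F, prob (fun e : MultiSpace n m => tt Y.card ≤ eIn e Y) := by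
    refine le_trans (le_of_eq (prob_congr fun e => ?_)) (prob_union F _)
    constructor
    · rintro ⟨Y, h1, h2, h3⟩
      exact ⟨Y, by simp [hF, h1, h2], h3⟩
    · rintro ⟨Y, hYF, h3⟩
      simp only [hF, mem_filter, mem_univ, true_and] at hYF
      exact ⟨Y, hYF.1, hYF.2, h3⟩
  -- step B : each prob ≤ g Y.card
  have hA2 : ∑ Y ∈ F, prob (fun e : MultiSpace n m => tt Y.card ≤ eIn e Y)
      ≤ ∑ Y ∈ F, g Y.card := by
    refine Finset.sum_le_sum fun Y _ => ?_
    exact probY hn Y (tt Y.card)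
  -- step C : group by cardinality
  have hA3 : ∑ Y ∈ F, g Y.card ≤ ∑ y ∈ Icc 1 Y₀, (n.choose y : ℝ) * g y := by
    have hsub : F ⊆ (Icc 1 Y₀).biUnion (fun y => powersetCard y univ) := by
      intro Y hY
      simp only [hF, mem_filter, mem_univ, true_and] at hY
      refine Finset.mem_biUnion.2 ⟨Y.card, ?_, Finset.mem_powersetCard_univ.2 rfl⟩
      rw [Finset.mem_Icc]
      exact ⟨Finset.card_pos.2 hY.1, hY.2⟩
    have hdisj : ((Icc 1 Y₀ : Finset ℕ) : Set ℕ).PairwiseDisjoint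
        (fun y => powersetCard y (univ : Finset (Fin n))) := by
      intro a _ b _ hab
      refine Finset.disjoint_left.2 fun Y hYa hYb => hab ?_
      rw [← Finset.mem_powersetCard_univ.1 hYa, ← Finset.mem_powersetCard_univ.1 hYb]
    calc ∑ Y ∈ F, g Y.card
        ≤ ∑ Y ∈ (Icc 1 Y₀).biUnion (fun y => powersetCard y univ), g Y.card :=
          Finset.sum_le_sum_of_subset_of_nonneg hsub (fun Y _ _ => hgnonneg _)
      _ = ∑ y ∈ Icc 1 Y₀, ∑ Y ∈ powersetCard y (univ : Finset (Fin n)), g Y.card :=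
          Finset.sum_biUnion hdisj
      _ = ∑ y ∈ Icc 1 Y₀, (n.choose y : ℝ) * g y := by
          refine Finset.sum_congr rfl fun y _ => ?_
          rw [Finset.sum_congr rfl (fun Y hY => by
            rw [Finset.mem_powersetCard_univ.1 hY])]
          rw [Finset.sum_const, card_powersetCard, card_univ, Fintype.card_fin,
            nsmul_eq_mul]
  -- step D : per-term bound
  have hA4 : ∑ y ∈ Icc 1 Y₀, (n.choose y : ℝ) * g y
      ≤ ∑ y ∈ Icc 1 Y₀, (D / n) * 2 * (1/2:ℝ)^(y-1) := by
    refine Finset.sum_le_sum fun y hy => ?_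
    rw [Finset.mem_Icc] at hy
    have hy1 : 1 ≤ y := hy.1
    have hyR : (0:ℝ) < y := by exact_mod_cast hy1
    have hty : L * y ≤ (tt y : ℝ) := Nat.le_ceil _
    have ht1 : 1 ≤ tt y := by
      rw [htt]
      exact Nat.ceil_pos.2 (by positivity)
    have htR : (0:ℝ) < tt y := by exact_mod_cast ht1
    have hu : (y:ℝ)/n ≤ c' := by
      rw [div_le_iff₀ hnR]
      calc (y:ℝ) ≤ (Y₀:ℝ) := by exact_mod_cast hy.2
        _ ≤ c' * n := hY₀
    have hbase : Real.exp 1 * m * (y:ℝ)^2 / ((tt y:ℝ) * (n:ℝ)^2) ≤ A * ((y:ℝ)/n) := by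
      rw [div_le_iff₀ (by positivity)]
      have key : Real.exp 1 * m * y ≤ A * (tt y) * n := by
        calc Real.exp 1 * m * y ≤ (A * L * n) * y :=
              mul_le_mul_of_nonneg_right hmA (le_of_lt hyR)
          _ = (A * (L * y)) * n := by ring
          _ ≤ (A * (tt y)) * n := by
              apply mul_le_mul_of_nonneg_right _ (le_of_lt hnR)
              exact mul_le_mul_of_nonneg_left hty (le_of_lt hApos)
          _ = A * (tt y) * n := rfl
      calc Real.exp 1 * m * (y:ℝ)^2 = (Real.exp 1 * m * y) * y := by ring
        _ ≤ (A * (tt y) * n) * y := mul_le_mul_of_nonneg_right key (le_of_lt hyR)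
        _ = A * ((y:ℝ)/n) * ((tt y:ℝ) * (n:ℝ)^2) := by field_simp
    exact per_y n m y (tt y) A c' L D hn hy1 ht1 hL2 hbase hty hu hApos hAc1 hD hDc
  -- step E : geometric sum
  have hA5 : ∑ y ∈ Icc 1 Y₀, (D / n) * 2 * (1/2:ℝ)^(y-1) ≤ 4 * D / n := by
    have hre : ∑ y ∈ Icc 1 Y₀, (1/2:ℝ)^(y-1) ≤ 2 := by
      have : (Icc 1 Y₀ : Finset ℕ) = Ico 1 (Y₀+1) := by
        rw [Nat.Icc_eq_range', Nat.Ico_eq_range']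
      rw [this, Finset.sum_Ico_eq_sum_range]
      simpa using sum_geometric_two_le Y₀
    calc ∑ y ∈ Icc 1 Y₀, (D / n) * 2 * (1/2:ℝ)^(y-1)
        = (D / n) * 2 * ∑ y ∈ Icc 1 Y₀, (1/2:ℝ)^(y-1) := by rw [Finset.mul_sum]
      _ ≤ (D / n) * 2 * 2 := by
          apply mul_le_mul_of_nonneg_left hre (by positivity)
      _ = 4 * D / n := by ring
  exact le_trans hA1 (le_trans hA2 (le_trans hA3 (le_trans hA4 hA5)))

set_option maxHeartbeats 1000000 in
lemma mainTendsto (k : ℕ) (d : ℝ)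
    (hk4 : 4 ≤ k)
    (hb : 4 * Real.exp 7 ≤ Real.log k)
    (hc : 1 ≤ Real.log (Real.log k))
    (hdk : 12 * Real.exp 8 * Real.log (Real.log k) ≤ Real.log k)
    (hee : 8 * Real.exp 7 + Real.log (12 * Real.exp 8)
        ≤ Real.log (Real.log k) - Real.log (Real.log (Real.log k)))
    (hd0 : 0 ≤ d) (hd2 : d ≤ 2 * k * Real.log k) :
    Tendsto (fun n : ℕ =>
        prob (fun e : MultiSpace n ⌈d * n / 2⌉₊ =>
          ∀ Y : Finset (Fin n), Y.Nonempty →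
            Y.card ≤ ⌈2 * n * Real.log (Real.log k) / (k * Real.log k)⌉₊ →
            (eIn e Y : ℝ) < (Real.exp (-7) * Real.log k / 2) * Y.card))
      atTop (nhds 1) := by
  have e7 : Real.exp (-7) * Real.exp 7 = 1 := by
    rw [← Real.exp_add]; norm_num
  have e87 : Real.exp 8 * Real.exp (-7) = Real.exp 1 := by
    rw [← Real.exp_add]; norm_num
  set lk := Real.log k with hlk
  set llk := Real.log lk with hllk
  have hkR : (4:ℝ) ≤ (k:ℝ) := by exact_mod_cast hk4
  have hkpos : (0:ℝ) < k := by linarith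
  have hexp7 : (0:ℝ) < Real.exp 7 := Real.exp_pos _
  have hlk1 : (1:ℝ) ≤ lk := by nlinarith [Real.one_le_exp (by norm_num : (0:ℝ) ≤ 7)]
  have hlkpos : (0:ℝ) < lk := by linarith
  have hllkpos : (0:ℝ) < llk := by linarith
  have hklk : (1:ℝ) ≤ (k:ℝ) * lk := by nlinarith
  set L := Real.exp (-7) * lk / 2 with hL
  have hL2 : 2 ≤ L := by
    rw [hL]
    calc (2:ℝ) = Real.exp (-7) * (4 * Real.exp 7) / 2 := by
          field_simp
          nlinarith [e7]
      _ ≤ Real.exp (-7) * lk / 2 := by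
          have := Real.exp_pos (-7)
          apply div_le_div_of_nonneg_right _ (by norm_num)
          · exact mul_le_mul_of_nonneg_left hb (le_of_lt this)
  have hLpos : 0 < L := by linarith
  set K := (k:ℝ) * lk + 1 with hK
  have hKpos : 0 < K := by nlinarith
  set A := 2 * Real.exp 8 * K / lk with hA
  have hApos : 0 < A := by positivity
  set c' := 3 * llk / ((k:ℝ) * lk) with hc'
  have hc'pos : 0 < c' := by positivity
  set D := Real.exp 1 * A ^ L * c' ^ (L-2) with hD
  have hDnonneg : 0 ≤ D := by rw [hD]; positivity
  -- A * L = e * K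
  have hAL : A * L = Real.exp 1 * K := by
    rw [hA, hL]
    field_simp
    linear_combination e87
  -- A ≤ 4 e^8 k
  have hAub : A ≤ 4 * Real.exp 8 * k := by
    rw [hA, div_le_iff₀ hlkpos]
    have hK2 : K ≤ 2 * ((k:ℝ) * lk) := by rw [hK]; linarith
    have h8 : (0:ℝ) < Real.exp 8 := Real.exp_pos 8
    nlinarith
  -- A c' ≤ 12 e^8 llk / lk ≤ 1
  set wb := 12 * Real.exp 8 * llk / lk with hwb
  have hwbpos : 0 < wb := by positivity
  have hAc'w : A * c' ≤ wb := by
    rw [hc', hwb]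
    calc A * (3 * llk / ((k:ℝ) * lk)) ≤ (4 * Real.exp 8 * k) * (3 * llk / ((k:ℝ) * lk)) := by
          apply mul_le_mul_of_nonneg_right hAub (by positivity)
      _ = 12 * Real.exp 8 * llk / lk := by
          field_simp
          ring
  have hwb1 : wb ≤ 1 := by
    rw [hwb, div_le_one hlkpos]
    linarith [hdk]
  have hAc1 : A * c' ≤ 1 := hAc'w.trans hwb1
  have hAc'pos : 0 < A * c' := by positivity
  -- (A c')^L ≤ exp (-(4 lk))
  have hwL : (A * c') ^ L ≤ Real.exp (-(4 * lk)) := by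
    have h1 : (A * c') ^ L ≤ wb ^ L :=
      Real.rpow_le_rpow (le_of_lt hAc'pos) hAc'w (le_of_lt hLpos)
    have h2 : wb ^ L = Real.exp (L * Real.log wb) := by
      rw [Real.rpow_def_of_pos hwbpos, mul_comm]
    have hlogwb : Real.log wb ≤ -(8 * Real.exp 7) := by
      rw [hwb, Real.log_div (by positivity) (ne_of_gt hlkpos),
        Real.log_mul (by positivity) (ne_of_gt hllkpos)]
      rw [← hllk]
      linarith [hee]
    have h3 : L * Real.log wb ≤ -(4 * lk) := by
      calc L * Real.log wb ≤ L * (-(8 * Real.exp 7)) :=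
            mul_le_mul_of_nonneg_left hlogwb (le_of_lt hLpos)
        _ = -(4 * lk) := by rw [hL]; linear_combination (-4 * lk) * e7
    exact h1.trans (h2.trans_le (by exact Real.exp_le_exp.2 h3))
  -- D c' ≤ 1/4
  have hDc : D * c' ≤ 1/4 := by
    have hid : D * c' = Real.exp 1 * (A * c') ^ L / c' := by
      rw [hD, Real.mul_rpow (le_of_lt hApos) (le_of_lt hc'pos)]
      have hc2 : c' ^ (L - 2) = c' ^ L / c' ^ (2:ℝ) := Real.rpow_sub hc'pos L 2
      rw [hc2]
      have : c' ^ (2:ℝ) = c' ^ (2:ℕ) := by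
        rw [← Real.rpow_natCast c' 2]; norm_num
      rw [this]
      field_simp
    rw [hid]
    have hlkk : lk ≤ (k:ℝ) := by
      have := Real.log_le_sub_one_of_pos hkpos
      rw [← hlk] at this
      linarith
    have hc'lb : 1 / (k:ℝ)^2 ≤ c' := by
      have h1 : (k:ℝ)*lk ≤ (k:ℝ)^2 := by nlinarith
      have h2 : 1/(k:ℝ)^2 ≤ 1/((k:ℝ)*lk) :=
        one_div_le_one_div_of_le (by positivity) h1
      refine h2.trans ?_
      rw [hc']
      rw [div_le_div_iff₀ (by positivity) (by positivity)]
      nlinarith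
    have hexp4 : Real.exp (-(4 * lk)) = 1 / (k:ℝ)^4 := by
      rw [Real.exp_neg]
      congr 1
      have : (4:ℝ) * lk = (4:ℕ) * lk := by norm_num
      rw [this, Real.exp_nat_mul, hlk, Real.exp_log hkpos]
      norm_num
    have step : Real.exp 1 * (A * c') ^ L / c' ≤ Real.exp 1 * (1 / (k:ℝ)^4) * (k:ℝ)^2 := by
      rw [div_le_iff₀ hc'pos]
      calc Real.exp 1 * (A * c') ^ L
          ≤ Real.exp 1 * (1 / (k:ℝ)^4) := by
            apply mul_le_mul_of_nonneg_left _ (le_of_lt (Real.exp_pos 1))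
            rw [← hexp4]; exact hwL
        _ = (Real.exp 1 * (1 / (k:ℝ)^4) * (k:ℝ)^2) * (1/(k:ℝ)^2) := by
            field_simp
        _ ≤ (Real.exp 1 * (1 / (k:ℝ)^4) * (k:ℝ)^2) * c' := by
            apply mul_le_mul_of_nonneg_left hc'lb (by positivity)
    refine step.trans ?_
    have he3 : Real.exp 1 ≤ 3 := by
      nlinarith [Real.exp_one_lt_d9]
    rw [mul_comm (Real.exp 1) _, mul_assoc]
    calc 1 / (k:ℝ)^4 * (Real.exp 1 * (k:ℝ)^2) ≤ 1 / (k:ℝ)^4 * (3 * (k:ℝ)^2) := by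
          apply mul_le_mul_of_nonneg_left _ (by positivity)
          apply mul_le_mul_of_nonneg_right he3 (by positivity)
      _ = 3 / (k:ℝ)^2 := by field_simp
      _ ≤ 1/4 := by
          rw [div_le_div_iff₀ (by positivity) (by norm_num)]
          nlinarith
  -- now the limit
  have hbadle : ∀ᶠ n : ℕ in atTop,
      prob (fun e : MultiSpace n ⌈d * n / 2⌉₊ => ∃ Y : Finset (Fin n),
          Y.Nonempty ∧ Y.card ≤ ⌈2 * n * llk / ((k:ℝ) * lk)⌉₊ ∧ ⌈L * Y.card⌉₊ ≤ eIn e Y)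
        ≤ 4 * D / n := by
    have hev1 : ∀ᶠ n : ℕ in atTop, (1:ℕ) ≤ n := eventually_ge_atTop 1
    have hev2 : ∀ᶠ n : ℕ in atTop, (k:ℝ) * lk / llk ≤ (n:ℝ) :=
      tendsto_natCast_atTop_atTop.eventually_ge_atTop _
    filter_upwards [hev1, hev2] with n hn1 hn2
    have hnR : (1:ℝ) ≤ (n:ℝ) := by exact_mod_cast hn1
    have hnpos : (0:ℝ) < n := by linarith
    -- Y₀ bound
    have hx0 : (0:ℝ) ≤ 2 * n * llk / ((k:ℝ) * lk) := by positivity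
    have hY₀ : ((⌈2 * n * llk / ((k:ℝ) * lk)⌉₊ : ℕ) : ℝ) ≤ c' * n := by
      have h1 : ((⌈2 * n * llk / ((k:ℝ) * lk)⌉₊ : ℕ) : ℝ)
          < 2 * n * llk / ((k:ℝ) * lk) + 1 := Nat.ceil_lt_add_one hx0
      have h2 : (1:ℝ) ≤ n * llk / ((k:ℝ) * lk) := by
        rw [le_div_iff₀ (by positivity)]
        rw [div_le_iff₀ hllkpos] at hn2
        linarith
      have h3 : 2 * n * llk / ((k:ℝ) * lk) + n * llk / ((k:ℝ) * lk) = c' * n := by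
        rw [hc']
        field_simp
        ring
      linarith
    -- m bound
    have hmA : Real.exp 1 * (⌈d * n / 2⌉₊ : ℝ) ≤ A * L * n := by
      have hdn0 : (0:ℝ) ≤ d * n / 2 := by positivity
      have h1 : ((⌈d * n / 2⌉₊ : ℕ) : ℝ) < d * n / 2 + 1 := Nat.ceil_lt_add_one hdn0
      have h2 : d * n / 2 ≤ (k:ℝ) * lk * n := by
        have := mul_le_mul_of_nonneg_right hd2 (le_of_lt hnpos)
        linarith
      have hKn : K * n = (k:ℝ) * lk * n + n := by rw [hK]; ring
      have h3 : ((⌈d * n / 2⌉₊ : ℕ) : ℝ) ≤ K * n := by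
        linarith
      calc Real.exp 1 * (⌈d * n / 2⌉₊ : ℝ) ≤ Real.exp 1 * (K * n) := by
            apply mul_le_mul_of_nonneg_left h3 (le_of_lt (Real.exp_pos 1))
        _ = A * L * n := by rw [hAL]; ring
    exact prob_bad_le n ⌈d * n / 2⌉₊ ⌈2 * n * llk / ((k:ℝ) * lk)⌉₊ A c' L D
      hn1 hY₀ hc'pos hLpos hL2 hApos hAc1 hmA hD hDc
  have heq : ∀ᶠ n : ℕ in atTop,
      prob (fun e : MultiSpace n ⌈d * n / 2⌉₊ =>
          ∀ Y : Finset (Fin n), Y.Nonempty →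
            Y.card ≤ ⌈2 * n * llk / ((k:ℝ) * lk)⌉₊ →
            (eIn e Y : ℝ) < L * Y.card)
        = 1 - prob (fun e : MultiSpace n ⌈d * n / 2⌉₊ => ∃ Y : Finset (Fin n),
          Y.Nonempty ∧ Y.card ≤ ⌈2 * n * llk / ((k:ℝ) * lk)⌉₊ ∧ ⌈L * Y.card⌉₊ ≤ eIn e Y) := by
    filter_upwards [eventually_ge_atTop 1] with n hn1
    have : Nonempty (MultiSpace n ⌈d * n / 2⌉₊) :=
      ⟨fun _ => (⟨0, by omega⟩, ⟨0, by omega⟩)⟩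
    rw [prob_compl]
    congr 1
    apply prob_congr
    intro e
    constructor
    · intro h
      push_neg at h
      obtain ⟨Y, h1, h2, h3⟩ := h
      exact ⟨Y, h1, h2, Nat.ceil_le.2 h3⟩
    · rintro ⟨Y, h1, h2, h3⟩
      push_neg
      exact ⟨Y, h1, h2, Nat.ceil_le.1 h3⟩
  have hbad0 : Tendsto (fun n : ℕ =>
      prob (fun e : MultiSpace n ⌈d * n / 2⌉₊ => ∃ Y : Finset (Fin n),
        Y.Nonempty ∧ Y.card ≤ ⌈2 * n * llk / ((k:ℝ) * lk)⌉₊ ∧ ⌈L * Y.card⌉₊ ≤ eIn e Y))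
      atTop (nhds 0) :=
    squeeze_zero' (Eventually.of_forall fun n => prob_nonneg _) hbadle
      (tendsto_const_div_atTop_nhds_zero_nat (4 * D))
  have hfinal : Tendsto (fun n : ℕ =>
      1 - prob (fun e : MultiSpace n ⌈d * n / 2⌉₊ => ∃ Y : Finset (Fin n),
        Y.Nonempty ∧ Y.card ≤ ⌈2 * n * llk / ((k:ℝ) * lk)⌉₊ ∧ ⌈L * Y.card⌉₊ ≤ eIn e Y))
      atTop (nhds 1) := by
    have h1 : Tendsto (fun _ : ℕ => (1:ℝ)) atTop (nhds 1) := tendsto_const_nhds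
    simpa using h1.sub hbad0
  exact hfinal.congr' (heq.mono fun n h => h.symm)

lemma eventually_conds : ∀ᶠ k : ℕ in atTop,
    4 ≤ k ∧ 4 * Real.exp 7 ≤ Real.log k ∧ 1 ≤ Real.log (Real.log k) ∧
    12 * Real.exp 8 * Real.log (Real.log k) ≤ Real.log k ∧
    8 * Real.exp 7 + Real.log (12 * Real.exp 8)
      ≤ Real.log (Real.log k) - Real.log (Real.log (Real.log k)) := by
  have hnat : Tendsto (fun k : ℕ => (k:ℝ)) atTop atTop := tendsto_natCast_atTop_atTop
  have f1 : Tendsto (fun k : ℕ => Real.log k) atTop atTop :=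
    Real.tendsto_log_atTop.comp hnat
  have f2 : Tendsto (fun k : ℕ => Real.log (Real.log k)) atTop atTop :=
    Real.tendsto_log_atTop.comp f1
  have c1 : ∀ᶠ k : ℕ in atTop, 4 ≤ k := eventually_ge_atTop 4
  have c2 : ∀ᶠ k : ℕ in atTop, 4 * Real.exp 7 ≤ Real.log k := f1.eventually_ge_atTop _
  have c3 : ∀ᶠ k : ℕ in atTop, 1 ≤ Real.log (Real.log k) := f2.eventually_ge_atTop _
  have E4 : ∀ᶠ x : ℝ in atTop, 12 * Real.exp 8 * Real.log x ≤ x := by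
    have h := Real.isLittleO_log_id_atTop.def
      (show (0:ℝ) < 1/(12*Real.exp 8) by positivity)
    filter_upwards [h, eventually_ge_atTop (1:ℝ)] with x hx hx1
    rw [Real.norm_eq_abs, Real.norm_eq_abs, id] at hx
    have h1 : Real.log x ≤ |Real.log x| := le_abs_self _
    have h2 : |x| = x := abs_of_nonneg (by linarith)
    rw [h2] at hx
    have h3 : Real.log x ≤ 1/(12*Real.exp 8) * x := h1.trans hx
    have hpos : (0:ℝ) < 12 * Real.exp 8 := by positivity
    calc 12 * Real.exp 8 * Real.log x ≤ 12 * Real.exp 8 * (1/(12*Real.exp 8) * x) :=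
          mul_le_mul_of_nonneg_left h3 (le_of_lt hpos)
      _ = x := by field_simp
  have c4 : ∀ᶠ k : ℕ in atTop, 12 * Real.exp 8 * Real.log (Real.log k) ≤ Real.log k :=
    f1.eventually E4
  have E5 : ∀ᶠ x : ℝ in atTop,
      8 * Real.exp 7 + Real.log (12 * Real.exp 8) ≤ x - Real.log x := by
    have h := Real.isLittleO_log_id_atTop.def (show (0:ℝ) < 1/2 by norm_num)
    filter_upwards [h, eventually_ge_atTop
      (max 1 (2 * (8 * Real.exp 7 + Real.log (12 * Real.exp 8))))] with x hx hx1
    rw [Real.norm_eq_abs, Real.norm_eq_abs, id] at hx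
    have hx1' : (1:ℝ) ≤ x := le_trans (le_max_left _ _) hx1
    have hx2' : 2 * (8 * Real.exp 7 + Real.log (12 * Real.exp 8)) ≤ x :=
      le_trans (le_max_right _ _) hx1
    have h2 : |x| = x := abs_of_nonneg (by linarith)
    rw [h2] at hx
    have h3 : Real.log x ≤ 1/2 * x := (le_abs_self _).trans hx
    linarith
  have c5 := f2.eventually E5
  filter_upwards [c1, c2, c3, c4, c5] with k h1 h2 h3 h4 h5
  exact ⟨h1, h2, h3, h4, h5⟩

theorem statement15 :
    ∃ k₀ : ℕ, ∀ k : ℕ, k₀ ≤ k → ∀ d : ℝ,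
      2 * k * Real.log k - Real.log k - 4 ≤ d → d ≤ 2 * k * Real.log k →
      Tendsto (fun n : ℕ =>
          prob (fun e : MultiSpace n ⌈d * n / 2⌉₊ =>
            ∀ Y : Finset (Fin n), Y.Nonempty →
              Y.card ≤ ⌈2 * n * Real.log (Real.log k) / (k * Real.log k)⌉₊ →
              (eIn e Y : ℝ) < (Real.exp (-7) * Real.log k / 2) * Y.card))
        atTop (nhds 1) := by
  obtain ⟨k₀, hk₀⟩ := eventually_atTop.mp eventually_conds
  refine ⟨k₀, fun k hk d hd1 hd2 => ?_⟩
  obtain ⟨c1, c2, c3, c4, c5⟩ := hk₀ k hk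
  have hd0 : 0 ≤ d := by
    have hkR : (4:ℝ) ≤ (k:ℝ) := by exact_mod_cast c1
    have he7 : (8:ℝ) ≤ Real.exp 7 := by nlinarith [Real.add_one_le_exp (7:ℝ)]
    have h1 : (32:ℝ) ≤ Real.log k := by nlinarith
    have h2 : (7:ℝ) ≤ 2*(k:ℝ) - 1 := by linarith
    have h3 : (7:ℝ)*32 ≤ (2*(k:ℝ)-1) * Real.log k := by nlinarith
    nlinarith [hd1]
  exact mainTendsto k d c1 c2 c3 c4 c5 hd0 hd2
end
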